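/- Let {E_j} be a family of pairwise essentially disjoint integer translates of the chiral molecules R and S whose union contains the square Q_{2k}(n) of side 2k ≥ 8 centered at n ∈ ℤ². Then there exists i ∈ {1,...,8} such that every molecule E_j intersecting the concentric square Q_{2k-4}(n) belongs to the modulated phase 𝒵_i. -/

import Mathlib

open MeasureTheory Set Filter
open scoped ENNReal

noncomputable section

/-- The basic R-shaped chiral molecule. -/
def Rbase : Set (ℝ × ℝ) := (Icc (0:ℝ) 1 ×ˢ Icc (0:ℝ) 3) ∪ (Icc (1:ℝ) 2 ×ˢ Icc (2:ℝ) 3)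

/-- The basic S-shaped (mirror) chiral molecule. -/
def Sbase : Set (ℝ × ℝ) := (Icc (-1:ℝ) 0 ×ˢ Icc (0:ℝ) 3) ∪ (Icc (-2:ℝ) (-1) ×ˢ Icc (2:ℝ) 3)

/-- Translation of a subset of the plane by a vector. -/
def trSet (v : ℝ × ℝ) (A : Set (ℝ × ℝ)) : Set (ℝ × ℝ) :=
  (fun x => (v.1 + x.1, v.2 + x.2)) '' A

/-- Integer translate of the R molecule. -/
def Rmol (n : ℤ × ℤ) : Set (ℝ × ℝ) := trSet ((n.1 : ℝ), (n.2 : ℝ)) Rbase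

/-- Integer translate of the S molecule. -/
def Smol (n : ℤ × ℤ) : Set (ℝ × ℝ) := trSet ((n.1 : ℝ), (n.2 : ℝ)) Sbase

/-- A set is a molecule if it is an integer translate of R or of S. -/
def IsMolecule (E : Set (ℝ × ℝ)) : Prop := ∃ n : ℤ × ℤ, E = Rmol n ∨ E = Smol n

/-- A chiral family: molecules with pairwise Lebesgue-null intersections. -/
def ChiralFamily (F : Set (Set (ℝ × ℝ))) : Prop :=
  (∀ E ∈ F, IsMolecule E) ∧ ∀ E ∈ F, ∀ E' ∈ F, E ≠ E' → volume (E ∩ E') = 0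

/-- The eight modulated phases `𝒵_i`, `i = 1, ..., 8`. -/
def Zphase (i : ℕ) : Set (Set (ℝ × ℝ)) :=
  if i ≤ 4 then {E | ∃ n : ℤ × ℤ, E = Rmol n ∧ (n.2 + n.1) % 4 = (i : ℤ) % 4}
  else {E | ∃ n : ℤ × ℤ, E = Smol n ∧ (n.2 - n.1) % 4 = ((i : ℤ) - 4) % 4}

/-- Open axis-parallel square of side `r` centered at `x`. -/
def osq (r : ℝ) (x : ℝ × ℝ) : Set (ℝ × ℝ) :=
  Ioo (x.1 - r / 2) (x.1 + r / 2) ×ˢ Ioo (x.2 - r / 2) (x.2 + r / 2)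

/-- Euclidean norm on the plane. -/
def enr (x : ℝ × ℝ) : ℝ := Real.sqrt (x.1 ^ 2 + x.2 ^ 2)


abbrev Mol := Bool × ℤ × ℤ

def mcells (m : Mol) : List (ℤ × ℤ) :=
  match m with
  | (false, n) => [(n.1, n.2), (n.1, n.2+1), (n.1, n.2+2), (n.1+1, n.2+2)]
  | (true, n)  => [(n.1-1, n.2), (n.1-1, n.2+1), (n.1-1, n.2+2), (n.1-2, n.2+2)]

def mshift (p : ℤ × ℤ) (m : Mol) : Mol := (m.1, m.2.1 + p.1, m.2.2 + p.2)

def mval (m : Mol) : ℤ := if m.1 then m.2.2 - m.2.1 else m.2.2 + m.2.1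

def mphase (m : Mol) : ℕ := (if m.1 then 4 else 0) + ((mval m % 4 + 3) % 4 + 1).toNat

def relPhaseEq (e e' : Mol) : Bool := (e.1 == e'.1) && ((mval e - mval e') % 4 == 0)

def cont00 : List Mol := [(false, 0, 0), (false, 0, -1), (false, 0, -2), (false, -1, -2),
  (true, 1, 0), (true, 1, -1), (true, 1, -2), (true, 2, -2)]

def cand (d : ℤ × ℤ) : List Mol := cont00.map (mshift d)

inductive RTree where
  | dead : ℤ × ℤ → RTree
  | branch : ℤ × ℤ → List (Mol × RTree) → RTree

def molDisj (a b : Mol) : Bool := (mcells a).all fun x => !decide (x ∈ mcells b)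
def occDisj (occ : List Mol) (g : Mol) : Bool := occ.all fun m => molDisj g m
def occFree (occ : List Mol) (d : ℤ × ℤ) : Bool := occ.all fun m => decide (d ∉ mcells m)
def inRegion (v d : ℤ × ℤ) : Bool :=
  decide ((-2 ≤ d.1 ∧ d.1 ≤ 2 ∧ -2 ≤ d.2 ∧ d.2 ≤ 2) ∨
    (-2 ≤ d.1 - v.1 ∧ d.1 - v.1 ≤ 2 ∧ -2 ≤ d.2 - v.2 ∧ d.2 - v.2 ≤ 2))

def check : ℕ → (ℤ × ℤ) → List Mol → RTree → Bool
  | 0, _, _, _ => false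
  | _+1, v, occ, .dead d => inRegion v d && occFree occ d && (cand d).all fun g => !occDisj occ g
  | fuel+1, v, occ, .branch d ch => inRegion v d && occFree occ d &&
      ((cand d).all fun g => !occDisj occ g || ch.any fun p => p.1 == g && check fuel v (p.1 :: occ) p.2)

def certList : List (((ℤ×ℤ) × Mol × Mol) × RTree) := [
  (((1, 0), (false, 0, 0), (false, 1, -2)), .dead (1, 1)),
  (((1, 0), (false, 0, 0), (true, 3, -2)), .dead (1, 1)),
  (((1, 0), (false, 0, -1), (true, 3, -2)), .dead (1, -1)),
  (((1, 0), (false, -1, -2), (false, 1, -1)), .dead (0, -1)),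
  (((1, 0), (false, -1, -2), (false, 1, -2)), .dead (0, -2)),
  (((1, 0), (false, -1, -2), (true, 2, 0)), .dead (0, 1)),
  (((1, 0), (false, -1, -2), (true, 2, -1)), .dead (0, -1)),
  (((1, 0), (false, -1, -2), (true, 3, -2)), .branch (0, -1) [((false, 0, -3), .dead (1, -2)), ((true, 2, -3), .dead (0, -2))]),
  (((1, 0), (true, 1, 0), (false, 1, 0)), .branch (-1, 1) [((false, -2, -1), .dead (-1, 0)), ((true, 0, -1), .branch (-2, 0) [((false, -3, -2), .dead (-2, -1)), ((true, -1, -2), .branch (-2, 2) [((false, -2, 2), .branch (-1, -2) [((false, -1, -4), .branch (0, -1) [((true, 2, -3), .branch (2, 1) [((false, 2, -1), .branch (2, -2) [((false, 2, -4), .branch (3, -1) [((true, 5, -3), .dead (3, 0))]), ((true, 4, -4), .branch (3, -1) [((true, 5, -3), .dead (3, 0))])]), ((true, 4, -1), .dead (2, -1))])]), ((true, 1, -4), .branch (0, -1) [((true, 2, -3), .branch (2, 1) [((false, 2, -1), .branch (2, -2) [((false, 2, -4), .branch (3, -1) [((true, 5, -3), .dead (3, 0))]), ((true, 4, -4), .branch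 (3, -1) [((true, 5, -3), .dead (3, 0))])]), ((true, 4, -1), .dead (2, -1))])])]), ((true, -1, 2), .branch (-1, -2) [((false, -1, -4), .branch (0, -1) [((true, 2, -3), .branch (2, 1) [((false, 2, -1), .branch (2, -2) [((false, 2, -4), .branch (3, -1) [((true, 5, -3), .dead (3, 0))]), ((true, 4, -4), .branch (3, -1) [((true, 5, -3), .dead (3, 0))])]), ((true, 4, -1), .dead (2, -1))])]), ((true, 1, -4), .branch (0, -1) [((true, 2, -3), .branch (2, 1) [((false, 2, -1), .branch (2, -2) [((false, 2, -4), .branch (3, -1) [((true, 5, -3), .dead (3, 0))]), ((true, 4, -4), .branch (3, -1) [((true, 5, -3), .dead (3, 0))])]), ((true, 4, -1), .dead (2, -1))])])])])])]),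
  (((1, 0), (true, 1, 0), (false, 1, -1)), .branch (-1, 1) [((false, -2, -1), .dead (-1, 0)), ((true, 0, -1), .dead (0, -1))]),
  (((1, 0), (true, 1, 0), (false, 1, -2)), .branch (-1, 1) [((false, -2, -1), .dead (-1, 0)), ((true, 0, -1), .dead (0, -1))]),
  (((1, 0), (true, 1, -1), (false, 1, 0)), .branch (-1, 0) [((false, -2, -2), .dead (-1, -1)), ((true, 0, -2), .branch (-2, -1) [((false, -3, -3), .dead (-2, -2)), ((true, -1, -3), .branch (-2, 1) [((false, -2, 1), .dead (-1, 2)), ((true, -1, 1), .branch (-1, 2) [((false, -1, 2), .dead (0, 2)), ((true, 0, 2), .branch (0, 2) [((false, 0, 2), .branch (0, -2) [((false, 0, -4), .branch (1, -1) [((true, 3, -3), .branch (2, 0) [((true, 4, -2), .dead (2, 1))])]), ((true, 2, -4), .branch (1, -1) [((true, 3, -3), .branch (2, 0) [((true, 4, -2), .dead (2, 1))])])])])])])])]),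
  (((1, 0), (true, 1, -1), (false, 1, -1)), .branch (-1, 0) [((false, -2, -2), .dead (-1, -1)), ((true, 0, -2), .branch (-2, -1) [((false, -3, -3), .dead (-2, -2)), ((true, -1, -3), .branch (-2, 1) [((false, -2, 1), .dead (-1, 2)), ((true, -1, 1), .branch (-1, 2) [((false, -1, 2), .dead (0, 2)), ((true, 0, 2), .branch (0, 2) [((false, 0, 2), .dead (1, 2))])])])])]),
  (((1, 0), (true, 1, -1), (false, 1, -2)), .branch (-1, 0) [((false, -2, -2), .dead (-1, -1)), ((true, 0, -2), .dead (0, -2))]),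
  (((1, 0), (true, 1, -1), (true, 3, -2)), .dead (1, -1)),
  (((1, 0), (true, 1, -2), (false, 1, 0)), .branch (-1, -1) [((false, -2, -3), .dead (-1, -2)), ((true, 0, -3), .branch (-2, -2) [((false, -3, -4), .branch (-2, 0) [((false, -2, 0), .dead (-1, 1)), ((true, -1, 0), .branch (-1, 1) [((false, -1, 1), .dead (0, 1)), ((true, 0, 1), .branch (0, 1) [((false, 0, 1), .branch (1, -1) [((false, 1, -3), .branch (2, 0) [((true, 4, -2), .dead (2, -2))]), ((true, 3, -3), .dead (1, -2))])])])]), ((true, -1, -4), .branch (-2, 0) [((false, -2, 0), .dead (-1, 1)), ((true, -1, 0), .branch (-1, 1) [((false, -1, 1), .dead (0, 1)), ((true, 0, 1), .branch (0, 1) [((false, 0, 1), .branch (1, -1) [((false, 1, -3), .branch (2, 0) [((true, 4, -2), .dead (2, -2))]), ((true, 3, -3), .dead (1, -2))])])])])])]),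
  (((1, 0), (true, 1, -2), (false, 1, -1)), .branch (-1, -1) [((false, -2, -3), .dead (-1, -2)), ((true, 0, -3), .branch (-2, -2) [((false, -3, -4), .branch (-2, 0) [((false, -2, 0), .dead (-1, 1)), ((true, -1, 0), .branch (-1, 1) [((false, -1, 1), .dead (0, 1)), ((true, 0, 1), .branch (0, 1) [((false, 0, 1), .dead (1, 2))])])]), ((true, -1, -4), .branch (-2, 0) [((false, -2, 0), .dead (-1, 1)), ((true, -1, 0), .branch (-1, 1) [((false, -1, 1), .dead (0, 1)), ((true, 0, 1), .branch (0, 1) [((false, 0, 1), .dead (1, 2))])])])])]),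
  (((1, 0), (true, 1, -2), (false, 1, -2)), .branch (-1, -1) [((false, -2, -3), .dead (-1, -2)), ((true, 0, -3), .branch (-2, -2) [((false, -3, -4), .branch (-2, 0) [((false, -2, 0), .dead (-1, 1)), ((true, -1, 0), .branch (-1, 1) [((false, -1, 1), .dead (0, 1)), ((true, 0, 1), .branch (0, 1) [((false, 0, 1), .dead (1, 1))])])]), ((true, -1, -4), .branch (-2, 0) [((false, -2, 0), .dead (-1, 1)), ((true, -1, 0), .branch (-1, 1) [((false, -1, 1), .dead (0, 1)), ((true, 0, 1), .branch (0, 1) [((false, 0, 1), .dead (1, 1))])])])])]),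
  (((1, 0), (true, 1, -2), (true, 2, 0)), .dead (0, 1)),
  (((1, 0), (true, 1, -2), (true, 3, -2)), .dead (1, -2)),
  (((0, 1), (false, 0, -2), (false, 0, 1)), .branch (1, 1) [((true, 3, -1), .dead (1, -1))]),
  (((0, 1), (false, 0, -2), (true, 1, 1)), .branch (-1, 2) [((false, -2, 0), .dead (-1, 0)), ((true, 0, 0), .branch (-2, 1) [((false, -3, -1), .dead (-2, 0)), ((true, -1, -1), .dead (-1, -1))])]),
  (((0, 1), (false, -1, -2), (true, 1, 1)), .branch (-1, 1) [((false, -2, -1), .dead (-1, 2))]),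
  (((0, 1), (false, -1, -2), (true, 2, -1)), .dead (0, -1)),
  (((0, 1), (true, 1, -2), (false, 0, 1)), .branch (-1, -1) [((false, -2, -3), .dead (-1, -2)), ((true, 0, -3), .branch (-1, 1) [((true, 0, 1), .branch (-2, -2) [((false, -3, -4), .branch (-2, 0) [((true, -1, 0), .branch (1, 2) [((false, 1, 0), .branch (1, -1) [((false, 1, -3), .branch (2, 0) [((true, 4, -2), .dead (2, -2))]), ((true, 3, -3), .dead (1, -2))]), ((true, 3, 0), .dead (1, 0))])]), ((true, -1, -4), .branch (-2, 0) [((true, -1, 0), .branch (1, 2) [((false, 1, 0), .branch (1, -1) [((false, 1, -3), .branch (2, 0) [((true, 4, -2), .dead (2, -2))]), ((true, 3, -3), .dead (1, -2))]), ((true, 3, 0), .dead (1, 0))])])])])]),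
  (((0, 1), (true, 1, -2), (true, 1, 1)), .branch (-1, 1) [((false, -2, -1), .dead (-1, -1))]),
  (((0, 1), (true, 2, -2), (false, 0, 1)), .branch (1, 1) [((true, 3, -1), .dead (1, 2))]),
  (((0, 1), (true, 2, -2), (false, -1, -1)), .dead (0, -1))
]

def certTable (v : ℤ×ℤ) (e e' : Mol) : RTree :=
  (certList.lookup (v, e, e')).getD (.dead (0,0))

def goodPair (v : ℤ×ℤ) (e e' : Mol) : Bool :=
  (e == e') || !(molDisj e e') || relPhaseEq e e' || check 20 v [e, e'] (certTable v e e')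

set_option maxRecDepth 10000 in
theorem master : ∀ v ∈ [((1:ℤ),(0:ℤ)), (0,1)], ∀ e ∈ cont00, ∀ e' ∈ cand v,
    goodPair v e e' = true := by decide
section DiscreteLemmas

lemma mshift_cancel (c : ℤ×ℤ) (m : Mol) : mshift c (mshift (-c.1, -c.2) m) = m := by
  obtain ⟨b, x, y⟩ := m
  simp [mshift]

lemma mshift_inj (c : ℤ×ℤ) {a b : Mol} (h : mshift c a = mshift c b) : a = b := by
  obtain ⟨b1, x1, y1⟩ := a; obtain ⟨b2, x2, y2⟩ := b
  simp only [mshift, Prod.ext_iff] at h ⊢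
  obtain ⟨hb, h2, h3⟩ := h
  refine ⟨hb, by omega, by omega⟩

lemma mem_unshift {c d : ℤ×ℤ} {m : Mol} (h : ((c.1 + d.1, c.2 + d.2) : ℤ×ℤ) ∈ mcells m) :
    d ∈ mcells (mshift (-c.1, -c.2) m) := by
  obtain ⟨b, x, y⟩ := m
  cases b <;> (simp [mcells, mshift, Prod.ext_iff] at h ⊢; omega)

lemma mem_shift' {x : ℤ×ℤ} {m : Mol} (p : ℤ×ℤ) (h : x ∈ mcells m) :
    ((x.1 + p.1, x.2 + p.2) : ℤ×ℤ) ∈ mcells (mshift p m) := by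
  obtain ⟨b, u, v⟩ := m
  cases b <;> (simp [mcells, mshift, Prod.ext_iff] at h ⊢; omega)

lemma mem_cont00 {m : Mol} (h : ((0,0) : ℤ×ℤ) ∈ mcells m) : m ∈ cont00 := by
  obtain ⟨b, x, y⟩ := m
  cases b <;> (simp [mcells, Prod.ext_iff] at h; simp [cont00, Prod.ext_iff]; omega)

lemma mem_cand {d : ℤ×ℤ} {m : Mol} (h : d ∈ mcells m) : m ∈ cand d := by
  have h0 : ((0,0) : ℤ×ℤ) ∈ mcells (mshift (-d.1, -d.2) m) := by
    apply mem_unshift (c := d)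
    simpa using h
  have := mem_cont00 h0
  have : mshift d (mshift (-d.1, -d.2) m) ∈ cand d := List.mem_map_of_mem this
  rwa [mshift_cancel] at this

lemma molDisj_iff {a b : Mol} : molDisj a b = true ↔ (mcells a).Disjoint (mcells b) := by
  simp [molDisj, List.all_eq_true, List.Disjoint]

lemma phase_shift {e e' : Mol} (c : ℤ×ℤ) (h : relPhaseEq e e' = true) :
    mphase (mshift c e) = mphase (mshift c e') := by
  obtain ⟨b1, x1, y1⟩ := e; obtain ⟨b2, x2, y2⟩ := e'
  simp only [relPhaseEq, Bool.and_eq_true, beq_iff_eq] at h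
  obtain ⟨rfl, h2⟩ := h
  cases b1 <;> (simp [mphase, mval, mshift] at h2 ⊢; omega)

lemma mphase_bounds (m : Mol) : 1 ≤ mphase m ∧ mphase m ≤ 8 := by
  obtain ⟨b, x, y⟩ := m
  cases b <;> simp only [mphase, mval] <;> simp <;> omega

end DiscreteLemmas

section Window

def Wwin (a b k : ℤ) (c : ℤ×ℤ) : Prop :=
  a - k ≤ c.1 ∧ c.1 ≤ a + k - 1 ∧ b - k ≤ c.2 ∧ c.2 ≤ b + k - 1

def Winn (a b k : ℤ) (c : ℤ×ℤ) : Prop :=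
  a - k + 2 ≤ c.1 ∧ c.1 ≤ a + k - 3 ∧ b - k + 2 ≤ c.2 ∧ c.2 ≤ b + k - 3

lemma Winn_Wwin {a b k : ℤ} {c : ℤ×ℤ} (h : Winn a b k c) : Wwin a b k c := by
  obtain ⟨h1, h2, h3, h4⟩ := h; exact ⟨by omega, by omega, by omega, by omega⟩

lemma region_Wwin {a b k : ℤ} {c v d : ℤ×ℤ} (hc : Winn a b k c)
    (hcv : Winn a b k (c.1 + v.1, c.2 + v.2)) (hd : inRegion v d = true) :
    Wwin a b k (c.1 + d.1, c.2 + d.2) := by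
  simp only [inRegion, decide_eq_true_eq] at hd
  obtain ⟨h1, h2, h3, h4⟩ := hc
  obtain ⟨h5, h6, h7, h8⟩ := hcv
  simp only [Wwin]
  dsimp at h5 h6 h7 h8
  omega

end Window

section Soundness

variable (T : ℤ×ℤ → Mol) (a b k : ℤ)

def Hcell : Prop := ∀ c, Wwin a b k c → c ∈ mcells (T c)
def Hdisj : Prop := ∀ c c', Wwin a b k c → Wwin a b k c' →
      T c = T c' ∨ (mcells (T c)).Disjoint (mcells (T c'))

/-- The forcing step: the molecule covering cell `c + d`, viewed relative to `c`,
is a candidate at `d` disjoint from all previously recorded molecules. -/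
lemma force_step (hcell : Hcell T a b k) (hdisj : Hdisj T a b k) {c v : ℤ×ℤ} (hc : Winn a b k c) (hcv : Winn a b k (c.1 + v.1, c.2 + v.2))
    {occ : List Mol} {d : ℤ×ℤ}
    (hinv : ∀ g ∈ occ, ∃ d' : ℤ×ℤ, Wwin a b k (c.1 + d'.1, c.2 + d'.2) ∧
      T (c.1 + d'.1, c.2 + d'.2) = mshift c g)
    (hreg : inRegion v d = true) (hfree : occFree occ d = true) :
    ∃ g : Mol, g ∈ cand d ∧ occDisj occ g = true ∧
      T (c.1 + d.1, c.2 + d.2) = mshift c g := by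
  have hW : Wwin a b k (c.1 + d.1, c.2 + d.2) := region_Wwin hc hcv hreg
  set cd : ℤ×ℤ := (c.1 + d.1, c.2 + d.2) with hcd
  have hu : cd ∈ mcells (T cd) := hcell cd hW
  set g : Mol := mshift (-c.1, -c.2) (T cd) with hg
  have hTg : T cd = mshift c g := (mshift_cancel c (T cd)).symm
  have hdg : d ∈ mcells g := mem_unshift hu
  refine ⟨g, mem_cand hdg, ?_, hTg⟩
  simp only [occDisj, List.all_eq_true]
  intro g' hg'
  obtain ⟨d', hd'W, hTd'⟩ := hinv g' hg'
  rcases hdisj cd (c.1 + d'.1, c.2 + d'.2) hW hd'W with heq | hdis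
  · exfalso
    rw [hTg, hTd'] at heq
    have : g = g' := mshift_inj c heq
    subst this
    simp only [occFree, List.all_eq_true] at hfree
    exact (of_decide_eq_true (hfree g hg')) hdg
  · rw [molDisj_iff]
    intro x hx hx'
    rw [hTg] at hdis
    rw [hTd'] at hdis
    exact hdis (mem_shift' c hx) (mem_shift' c hx')

lemma check_sound (hcell : Hcell T a b k) (hdisj : Hdisj T a b k) {c v : ℤ×ℤ} (hc : Winn a b k c) (hcv : Winn a b k (c.1 + v.1, c.2 + v.2)) :
    ∀ (fuel : ℕ) (t : RTree) (occ : List Mol),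
      (∀ g ∈ occ, ∃ d' : ℤ×ℤ, Wwin a b k (c.1 + d'.1, c.2 + d'.2) ∧
        T (c.1 + d'.1, c.2 + d'.2) = mshift c g) →
      check fuel v occ t = true → False := by
  intro fuel
  induction fuel with
  | zero => intro t occ _ hchk; simp [check] at hchk
  | succ fuel ih =>
    intro t occ hinv hchk
    cases t with
    | dead d =>
      simp only [check, Bool.and_eq_true, List.all_eq_true] at hchk
      obtain ⟨⟨hreg, hfree⟩, hall⟩ := hchk
      obtain ⟨g, hgc, hgd, _⟩ := force_step T a b k hcell hdisj hc hcv hinv hreg hfree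
      have := hall g hgc
      simp [hgd] at this
    | branch d ch =>
      simp only [check, Bool.and_eq_true, List.all_eq_true] at hchk
      obtain ⟨⟨hreg, hfree⟩, hall⟩ := hchk
      obtain ⟨g, hgc, hgd, hTg⟩ := force_step T a b k hcell hdisj hc hcv hinv hreg hfree
      have := hall g hgc
      simp only [hgd, Bool.not_true, Bool.false_or, List.any_eq_true, Bool.and_eq_true,
        beq_iff_eq] at this
      obtain ⟨p, hp, rfl, hchk'⟩ := this
      apply ih p.2 (p.1 :: occ) ?_ hchk'
      intro g' hg'
      rcases List.mem_cons.mp hg' with rfl | hg'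
      · exact ⟨d, region_Wwin hc hcv hreg, hTg⟩
      · exact hinv g' hg'

lemma adjacent_phase (hcell : Hcell T a b k) (hdisj : Hdisj T a b k) {c v : ℤ×ℤ} (hv : v = ((1:ℤ),(0:ℤ)) ∨ v = ((0:ℤ),(1:ℤ)))
    (hc : Winn a b k c) (hcv : Winn a b k (c.1 + v.1, c.2 + v.2)) :
    mphase (T c) = mphase (T (c.1 + v.1, c.2 + v.2)) := by
  set cv : ℤ×ℤ := (c.1 + v.1, c.2 + v.2) with hcvdef
  set e : Mol := mshift (-c.1, -c.2) (T c) with he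
  set e' : Mol := mshift (-c.1, -c.2) (T cv) with he'
  have hTe : T c = mshift c e := (mshift_cancel c (T c)).symm
  have hTe' : T cv = mshift c e' := (mshift_cancel c (T cv)).symm
  have he0 : e ∈ cont00 := by
    apply mem_cont00
    apply mem_unshift (c := c) (d := ((0:ℤ),(0:ℤ)))
    simpa using hcell c (Winn_Wwin hc)
  have he'v : e' ∈ cand v := by
    apply mem_cand (d := v)
    exact mem_unshift (hcell cv (Winn_Wwin hcv))
  have hmaster := master v (by rcases hv with rfl | rfl <;> simp) e he0 e' he'v
  simp only [goodPair, Bool.or_eq_true, beq_iff_eq, Bool.not_eq_true'] at hmaster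
  rcases hmaster with ((heq | hnd) | hph) | hchk
  · rw [hTe, heq, ← hTe']
  · -- cells of e and e' overlap, so T c = T cv
    have : T c = T cv := by
      rcases hdisj c cv (Winn_Wwin hc) (Winn_Wwin hcv) with h | h
      · exact h
      · exfalso
        have : (mcells e).Disjoint (mcells e') := by
          intro x hx hx'
          rw [hTe] at h; rw [hTe'] at h
          exact h (mem_shift' c hx) (mem_shift' c hx')
        rw [← molDisj_iff] at this
        rw [this] at hnd
        exact Bool.noConfusion hnd
    rw [this]
  · rw [hTe, hTe']
    exact phase_shift c hph
  · exfalso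
    apply check_sound T a b k hcell hdisj hc hcv 20 (certTable v e e') [e, e'] ?_ hchk
    intro g hg
    rcases List.mem_cons.mp hg with rfl | hg
    · exact ⟨((0:ℤ),(0:ℤ)), by simpa using Winn_Wwin hc, by simpa using hTe⟩
    · simp only [List.mem_singleton] at hg
      subst hg
      exact ⟨v, Winn_Wwin hcv, hTe'⟩

theorem discrete_main (hcell : Hcell T a b k) (hdisj : Hdisj T a b k) :
    ∀ c c', Winn a b k c → Winn a b k c' → mphase (T c) = mphase (T c') := by
  have vert : ∀ x y : ℤ, a - k + 2 ≤ x → x ≤ a + k - 3 → b - k + 2 ≤ y → ∀ y', y ≤ y' →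
      y' ≤ b + k - 3 → mphase (T (x, y')) = mphase (T (x, y)) := by
    intro x y hx1 hx2 hy
    refine Int.le_induction ?_ ?_
    · intro _; rfl
    · intro t ht ihp hy'
      have h1 : mphase (T (x, t)) = mphase (T (x, t + 1)) := by
        have := adjacent_phase T a b k hcell hdisj (c := (x, t)) (v := ((0:ℤ),(1:ℤ)))
          (Or.inr rfl) ⟨hx1, hx2, by omega, by omega⟩
          (by refine ⟨?_, ?_, ?_, ?_⟩ <;> simp <;> omega)
        simpa using this
      rw [← h1, ihp (by omega)]
  have horiz : ∀ y x : ℤ, b - k + 2 ≤ y → y ≤ b + k - 3 → a - k + 2 ≤ x → ∀ x', x ≤ x' →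
      x' ≤ a + k - 3 → mphase (T (x', y)) = mphase (T (x, y)) := by
    intro y x hy1 hy2 hx
    refine Int.le_induction ?_ ?_
    · intro _; rfl
    · intro t ht ihp hy'
      have h1 : mphase (T (t, y)) = mphase (T (t + 1, y)) := by
        have := adjacent_phase T a b k hcell hdisj (c := (t, y)) (v := ((1:ℤ),(0:ℤ)))
          (Or.inl rfl) ⟨by omega, by omega, hy1, hy2⟩
          (by refine ⟨?_, ?_, ?_, ?_⟩ <;> simp <;> omega)
        simpa using this
      rw [← h1, ihp (by omega)]
  intro c c' hc hc'
  obtain ⟨h1, h2, h3, h4⟩ := hc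
  obtain ⟨h5, h6, h7, h8⟩ := hc'
  have step1 : mphase (T (c.1, c.2)) = mphase (T (c.1, c'.2)) := by
    rcases le_total c.2 c'.2 with h | h
    · exact (vert c.1 c.2 h1 h2 h3 c'.2 h h8).symm
    · exact vert c.1 c'.2 h1 h2 h7 c.2 h h4
  have step2 : mphase (T (c.1, c'.2)) = mphase (T (c'.1, c'.2)) := by
    rcases le_total c.1 c'.1 with h | h
    · exact (horiz c'.2 c.1 h7 h8 h1 c'.1 h h6).symm
    · exact horiz c'.2 c'.1 h7 h8 h5 c.1 h h2
  calc mphase (T c) = mphase (T (c.1, c.2)) := by rfl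
    _ = mphase (T (c.1, c'.2)) := step1
    _ = mphase (T (c'.1, c'.2)) := step2
    _ = mphase (T c') := by rfl
section Bridge

/-- Real-set interpretation of a discrete molecule. -/
def molSet (m : Mol) : Set (ℝ × ℝ) := if m.1 then Smol m.2 else Rmol m.2

/-- The closed unit cell with lower-left corner `c`. -/
def realCell (c : ℤ × ℤ) : Set (ℝ × ℝ) := Icc (c.1:ℝ) (c.1+1) ×ˢ Icc (c.2:ℝ) (c.2+1)

/-- The center of a unit cell. -/
def ctr (c : ℤ × ℤ) : ℝ × ℝ := ((c.1:ℝ) + 1/2, (c.2:ℝ) + 1/2)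

lemma mem_Rmol {n : ℤ×ℤ} {z : ℝ×ℝ} : z ∈ Rmol n ↔
    (((n.1:ℝ) ≤ z.1 ∧ z.1 ≤ n.1+1 ∧ (n.2:ℝ) ≤ z.2 ∧ z.2 ≤ n.2+3) ∨
     ((n.1:ℝ)+1 ≤ z.1 ∧ z.1 ≤ n.1+2 ∧ (n.2:ℝ)+2 ≤ z.2 ∧ z.2 ≤ n.2+3)) := by
  obtain ⟨z1, z2⟩ := z
  simp only [Rmol, trSet, Rbase, Set.mem_image, Set.mem_union, Set.mem_prod, Set.mem_Icc]
  constructor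
  · rintro ⟨⟨p, q⟩, hpq, heq⟩
    obtain ⟨h1, h2⟩ : (n.1:ℝ) + p = z1 ∧ (n.2:ℝ) + q = z2 := by
      simpa [Prod.ext_iff] using heq
    rcases hpq with ⟨⟨a1,a2⟩,a3,a4⟩ | ⟨⟨a1,a2⟩,a3,a4⟩
    · exact Or.inl ⟨by linarith, by linarith, by linarith, by linarith⟩
    · exact Or.inr ⟨by linarith, by linarith, by linarith, by linarith⟩
  · rintro (⟨a1,a2,a3,a4⟩ | ⟨a1,a2,a3,a4⟩)
    · exact ⟨(z1 - n.1, z2 - n.2), Or.inl ⟨⟨by dsimp only; linarith, by dsimp only; linarith⟩,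
        by dsimp only; linarith, by dsimp only; linarith⟩, by simp⟩
    · exact ⟨(z1 - n.1, z2 - n.2), Or.inr ⟨⟨by dsimp only; linarith, by dsimp only; linarith⟩,
        by dsimp only; linarith, by dsimp only; linarith⟩, by simp⟩

lemma mem_Smol {n : ℤ×ℤ} {z : ℝ×ℝ} : z ∈ Smol n ↔
    (((n.1:ℝ)-1 ≤ z.1 ∧ z.1 ≤ n.1 ∧ (n.2:ℝ) ≤ z.2 ∧ z.2 ≤ n.2+3) ∨
     ((n.1:ℝ)-2 ≤ z.1 ∧ z.1 ≤ n.1-1 ∧ (n.2:ℝ)+2 ≤ z.2 ∧ z.2 ≤ n.2+3)) := by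
  obtain ⟨z1, z2⟩ := z
  simp only [Smol, trSet, Sbase, Set.mem_image, Set.mem_union, Set.mem_prod, Set.mem_Icc]
  constructor
  · rintro ⟨⟨p, q⟩, hpq, heq⟩
    obtain ⟨h1, h2⟩ : (n.1:ℝ) + p = z1 ∧ (n.2:ℝ) + q = z2 := by
      simpa [Prod.ext_iff] using heq
    rcases hpq with ⟨⟨a1,a2⟩,a3,a4⟩ | ⟨⟨a1,a2⟩,a3,a4⟩
    · exact Or.inl ⟨by linarith, by linarith, by linarith, by linarith⟩
    · exact Or.inr ⟨by linarith, by linarith, by linarith, by linarith⟩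
  · rintro (⟨a1,a2,a3,a4⟩ | ⟨a1,a2,a3,a4⟩)
    · exact ⟨(z1 - n.1, z2 - n.2), Or.inl ⟨⟨by dsimp only; linarith, by dsimp only; linarith⟩,
        by dsimp only; linarith, by dsimp only; linarith⟩, by simp⟩
    · exact ⟨(z1 - n.1, z2 - n.2), Or.inr ⟨⟨by dsimp only; linarith, by dsimp only; linarith⟩,
        by dsimp only; linarith, by dsimp only; linarith⟩, by simp⟩

lemma mem_realCell {c : ℤ×ℤ} {z : ℝ×ℝ} : z ∈ realCell c ↔
    ((c.1:ℝ) ≤ z.1 ∧ z.1 ≤ c.1+1 ∧ (c.2:ℝ) ≤ z.2 ∧ z.2 ≤ c.2+1) := by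
  obtain ⟨z1, z2⟩ := z
  simp only [realCell, Set.mem_prod, Set.mem_Icc]
  tauto

lemma molSet_false (nn : ℤ×ℤ) : molSet (false, nn) = Rmol nn := by simp [molSet]
lemma molSet_true (nn : ℤ×ℤ) : molSet (true, nn) = Smol nn := by simp [molSet]

lemma realCell_subset {c : ℤ×ℤ} {m : Mol} (h : c ∈ mcells m) : realCell c ⊆ molSet m := by
  obtain ⟨b, nn⟩ := m
  intro z hz
  rw [mem_realCell] at hz
  obtain ⟨hz1, hz2, hz3, hz4⟩ := hz
  cases b
  · simp only [mcells, List.mem_cons, List.not_mem_nil, or_false, Prod.ext_iff] at h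
    rw [molSet_false, mem_Rmol]
    rcases h with ⟨h1, h2⟩ | ⟨h1, h2⟩ | ⟨h1, h2⟩ | ⟨h1, h2⟩ <;>
        (rw [h1] at hz1 hz2; rw [h2] at hz3 hz4; push_cast at hz1 hz2 hz3 hz4)
    · exact Or.inl ⟨by linarith, by linarith, by linarith, by linarith⟩
    · exact Or.inl ⟨by linarith, by linarith, by linarith, by linarith⟩
    · exact Or.inl ⟨by linarith, by linarith, by linarith, by linarith⟩
    · exact Or.inr ⟨by linarith, by linarith, by linarith, by linarith⟩
  · simp only [mcells, List.mem_cons, List.not_mem_nil, or_false, Prod.ext_iff] at h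
    rw [molSet_true, mem_Smol]
    rcases h with ⟨h1, h2⟩ | ⟨h1, h2⟩ | ⟨h1, h2⟩ | ⟨h1, h2⟩ <;>
        (rw [h1] at hz1 hz2; rw [h2] at hz3 hz4; push_cast at hz1 hz2 hz3 hz4)
    · exact Or.inl ⟨by linarith, by linarith, by linarith, by linarith⟩
    · exact Or.inl ⟨by linarith, by linarith, by linarith, by linarith⟩
    · exact Or.inl ⟨by linarith, by linarith, by linarith, by linarith⟩
    · exact Or.inr ⟨by linarith, by linarith, by linarith, by linarith⟩

lemma molSet_decomp {m : Mol} {z : ℝ×ℝ} (h : z ∈ molSet m) : ∃ c ∈ mcells m, z ∈ realCell c := by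
  obtain ⟨b, nn⟩ := m
  cases b
  · rw [molSet_false, mem_Rmol] at h
    rcases h with ⟨h1, h2, h3, h4⟩ | ⟨h1, h2, h3, h4⟩
    · rcases le_or_gt z.2 ((nn.2:ℝ)+1) with hy | hy
      · exact ⟨(nn.1, nn.2), by simp [mcells], mem_realCell.mpr ⟨by push_cast; linarith,
          by push_cast; linarith, by push_cast; linarith, by push_cast; linarith⟩⟩
      · rcases le_or_gt z.2 ((nn.2:ℝ)+2) with hy2 | hy2
        · exact ⟨(nn.1, nn.2+1), by simp [mcells], mem_realCell.mpr ⟨by push_cast; linarith,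
            by push_cast; linarith, by push_cast; linarith, by push_cast; linarith⟩⟩
        · exact ⟨(nn.1, nn.2+2), by simp [mcells], mem_realCell.mpr ⟨by push_cast; linarith,
            by push_cast; linarith, by push_cast; linarith, by push_cast; linarith⟩⟩
    · exact ⟨(nn.1+1, nn.2+2), by simp [mcells], mem_realCell.mpr ⟨by push_cast; linarith,
        by push_cast; linarith, by push_cast; linarith, by push_cast; linarith⟩⟩
  · rw [molSet_true, mem_Smol] at h
    rcases h with ⟨h1, h2, h3, h4⟩ | ⟨h1, h2, h3, h4⟩
    · rcases le_or_gt z.2 ((nn.2:ℝ)+1) with hy | hy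
      · exact ⟨(nn.1-1, nn.2), by simp [mcells], mem_realCell.mpr ⟨by push_cast; linarith,
          by push_cast; linarith, by push_cast; linarith, by push_cast; linarith⟩⟩
      · rcases le_or_gt z.2 ((nn.2:ℝ)+2) with hy2 | hy2
        · exact ⟨(nn.1-1, nn.2+1), by simp [mcells], mem_realCell.mpr ⟨by push_cast; linarith,
            by push_cast; linarith, by push_cast; linarith, by push_cast; linarith⟩⟩
        · exact ⟨(nn.1-1, nn.2+2), by simp [mcells], mem_realCell.mpr ⟨by push_cast; linarith,
            by push_cast; linarith, by push_cast; linarith, by push_cast; linarith⟩⟩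
    · exact ⟨(nn.1-2, nn.2+2), by simp [mcells], mem_realCell.mpr ⟨by push_cast; linarith,
        by push_cast; linarith, by push_cast; linarith, by push_cast; linarith⟩⟩

lemma ctr_mem_realCell (c : ℤ×ℤ) : ctr c ∈ realCell c := by
  rw [mem_realCell]
  refine ⟨by simp [ctr], by simp [ctr]; norm_num, by simp [ctr], by simp [ctr]; norm_num⟩

lemma ctr_mem_cells {c : ℤ×ℤ} {m : Mol} (h : ctr c ∈ molSet m) : c ∈ mcells m := by
  obtain ⟨c', hc', hmem⟩ := molSet_decomp h
  rw [mem_realCell] at hmem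
  obtain ⟨h1, h2, h3, h4⟩ := hmem
  simp only [ctr] at h1 h2 h3 h4
  have e1 : c'.1 = c.1 := by
    have p1 : (c'.1:ℝ) < (c.1:ℝ) + 1 := by linarith
    have p2 : (c.1:ℝ) < (c'.1:ℝ) + 1 := by linarith
    have q1 : c'.1 < c.1 + 1 := by exact_mod_cast p1
    have q2 : c.1 < c'.1 + 1 := by exact_mod_cast p2
    omega
  have e2 : c'.2 = c.2 := by
    have p1 : (c'.2:ℝ) < (c.2:ℝ) + 1 := by linarith
    have p2 : (c.2:ℝ) < (c'.2:ℝ) + 1 := by linarith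
    have q1 : c'.2 < c.2 + 1 := by exact_mod_cast p1
    have q2 : c.2 < c'.2 + 1 := by exact_mod_cast p2
    omega
  have : c' = c := Prod.ext e1 e2
  rwa [this] at hc'

lemma vol_realCell (c : ℤ×ℤ) : volume (realCell c) = 1 := by
  rw [realCell, Measure.volume_eq_prod, Measure.prod_prod, Real.volume_Icc, Real.volume_Icc]
  norm_num

lemma overlap_contra {E E' : Set (ℝ×ℝ)} {c : ℤ×ℤ} (hE : realCell c ⊆ E)
    (hE' : realCell c ⊆ E') (h0 : volume (E ∩ E') = 0) : False := by
  have h1 : volume (realCell c) ≤ volume (E ∩ E') :=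
    measure_mono (Set.subset_inter hE hE')
  rw [vol_realCell, h0] at h1
  exact absurd h1 (by simp)

lemma molSet_mem_Zphase (m : Mol) : molSet m ∈ Zphase (mphase m) := by
  obtain ⟨b, nn⟩ := m
  cases b
  · have hle : mphase (false, nn) ≤ 4 := by
      simp only [mphase, mval]; simp; omega
    simp only [Zphase, if_pos hle, Set.mem_setOf_eq]
    refine ⟨nn, by rw [molSet_false], ?_⟩
    simp only [mphase, mval]
    simp
    omega
  · have hgt : ¬ mphase (true, nn) ≤ 4 := by
      simp only [mphase, mval]; simp; omega
    simp only [Zphase, if_neg hgt, Set.mem_setOf_eq]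
    refine ⟨nn, by rw [molSet_true], ?_⟩
    simp only [mphase, mval]
    simp
    omega

end Bridge
/-- if a chiral family covers the square `Q_{2k}(n)`, `k ≥ 4`, then all
its molecules meeting `Q_{2k-4}(n)` belong to a single modulated phase `𝒵_i`. -/
theorem stmt1 (F : Set (Set (ℝ × ℝ))) (hF : ChiralFamily F)
    (n : ℤ × ℤ) (k : ℕ) (hk : 4 ≤ k)
    (hcov : osq (2 * k) ((n.1 : ℝ), (n.2 : ℝ)) ⊆ ⋃₀ F) :
    ∃ i : ℕ, 1 ≤ i ∧ i ≤ 8 ∧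
      ∀ E ∈ F, (E ∩ osq (2 * k - 4) ((n.1 : ℝ), (n.2 : ℝ))).Nonempty → E ∈ Zphase i := by
  classical
  obtain ⟨hmol, hnull⟩ := hF
  have hkz : (4:ℤ) ≤ (k:ℤ) := by exact_mod_cast hk
  have hdata : ∀ E : Set (ℝ×ℝ), ∃ m : Mol, E ∈ F → E = molSet m := by
    intro E
    by_cases hE : E ∈ F
    · obtain ⟨nn, hn⟩ := hmol E hE
      rcases hn with hn | hn
      · exact ⟨(false, nn), fun _ => by rw [molSet_false]; exact hn⟩
      · exact ⟨(true, nn), fun _ => by rw [molSet_true]; exact hn⟩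
    · exact ⟨(false, (0,0)), fun h => absurd h hE⟩
  choose D hD using hdata
  have hcover : ∀ c : ℤ×ℤ, ∃ E : Set (ℝ×ℝ), Wwin n.1 n.2 (k:ℤ) c → (E ∈ F ∧ ctr c ∈ E) := by
    intro c
    by_cases hc : Wwin n.1 n.2 (k:ℤ) c
    · have hmem : ctr c ∈ osq (2*k) ((n.1:ℝ), (n.2:ℝ)) := by
        obtain ⟨h1, h2, h3, h4⟩ := hc
        have e1 : ((n.1 - k:ℤ):ℝ) ≤ (c.1:ℝ) := by exact_mod_cast h1
        have e2 : (c.1:ℝ) ≤ ((n.1 + k - 1:ℤ):ℝ) := by exact_mod_cast h2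
        have e3 : ((n.2 - k:ℤ):ℝ) ≤ (c.2:ℝ) := by exact_mod_cast h3
        have e4 : (c.2:ℝ) ≤ ((n.2 + k - 1:ℤ):ℝ) := by exact_mod_cast h4
        push_cast at e1 e2 e3 e4
        simp only [osq, ctr, Set.mem_prod, Set.mem_Ioo]
        refine ⟨⟨by linarith, by linarith⟩, by linarith, by linarith⟩
      obtain ⟨E, hEF, hEz⟩ := Set.mem_sUnion.mp (hcov hmem)
      exact ⟨E, fun _ => ⟨hEF, hEz⟩⟩
    · exact ⟨∅, fun h => absurd h hc⟩
  choose Ec hEc using hcover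
  set T : ℤ×ℤ → Mol := fun c => D (Ec c) with hT
  have hcellT : Hcell T n.1 n.2 (k:ℤ) := by
    intro c hc
    obtain ⟨hEF, hEz⟩ := hEc c hc
    have heq : Ec c = molSet (T c) := hD (Ec c) hEF
    exact ctr_mem_cells (heq ▸ hEz)
  have hdisjT : Hdisj T n.1 n.2 (k:ℤ) := by
    intro c c' hc hc'
    by_cases he : Ec c = Ec c'
    · left; rw [hT]; simp only; rw [he]
    · right
      intro x hx hx'
      have h0 := hnull (Ec c) (hEc c hc).1 (Ec c') (hEc c' hc').1 he
      have hsub1 : realCell x ⊆ Ec c := by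
        rw [hD (Ec c) (hEc c hc).1]; exact realCell_subset hx
      have hsub2 : realCell x ⊆ Ec c' := by
        rw [hD (Ec c') (hEc c' hc').1]; exact realCell_subset hx'
      exact overlap_contra hsub1 hsub2 h0
  set c₀ : ℤ×ℤ := (n.1 - k + 2, n.2 - k + 2) with hc₀def
  have hc₀ : Winn n.1 n.2 (k:ℤ) c₀ := by
    refine ⟨?_, ?_, ?_, ?_⟩ <;> simp [hc₀def] <;> omega
  refine ⟨mphase (T c₀), (mphase_bounds (T c₀)).1, (mphase_bounds (T c₀)).2, ?_⟩
  rintro E hE ⟨z, hzE, hzsq⟩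
  have hEm : E = molSet (D E) := hD E hE
  obtain ⟨c, hcm, hcz⟩ := molSet_decomp (hEm ▸ hzE)
  rw [mem_realCell] at hcz
  obtain ⟨g1, g2, g3, g4⟩ := hcz
  simp only [osq, Set.mem_prod, Set.mem_Ioo] at hzsq
  obtain ⟨⟨s1, s2⟩, s3, s4⟩ := hzsq
  have hWinn : Winn n.1 n.2 (k:ℤ) c := by
    have q1 : (n.1 - k + 1 : ℤ) < c.1 := by
      have : ((n.1 - k + 1 : ℤ):ℝ) < (c.1:ℝ) := by push_cast; linarith
      exact_mod_cast this
    have q2 : (c.1 : ℤ) < n.1 + k - 2 := by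
      have : (c.1:ℝ) < ((n.1 + k - 2 : ℤ):ℝ) := by push_cast; linarith
      exact_mod_cast this
    have q3 : (n.2 - k + 1 : ℤ) < c.2 := by
      have : ((n.2 - k + 1 : ℤ):ℝ) < (c.2:ℝ) := by push_cast; linarith
      exact_mod_cast this
    have q4 : (c.2 : ℤ) < n.2 + k - 2 := by
      have : (c.2:ℝ) < ((n.2 + k - 2 : ℤ):ℝ) := by push_cast; linarith
      exact_mod_cast this
    exact ⟨by omega, by omega, by omega, by omega⟩
  have hWwin := Winn_Wwin hWinn
  have hEEc : E = Ec c := by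
    by_contra hne
    have h0 := hnull E hE (Ec c) (hEc c hWwin).1 hne
    have hsub1 : realCell c ⊆ E := by rw [hEm]; exact realCell_subset hcm
    have hsub2 : realCell c ⊆ Ec c := by
      rw [hD (Ec c) (hEc c hWwin).1]; exact realCell_subset (hcellT c hWwin)
    exact overlap_contra hsub1 hsub2 h0
  have hTc : T c = D E := by rw [hT]; simp only; rw [hEEc]
  have hph : mphase (D E) = mphase (T c₀) := by
    rw [← hTc]
    exact discrete_main T n.1 n.2 (k:ℤ) hcellT hdisjT c c₀ hWinn hc₀
  rw [hEm]
  exact hph ▸ molSet_mem_Zphase (D E)
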